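/- (Brownian case) For a > 0, t > 0 and L > 0, with Gaussian transition density φ_t(z) = e^{-z²/(2t)}/√(2πt) and q_j(ε) := ∫₀^L φ_t(y − a(j−ε)) dy, the number variance of the infinite system of independent Brownian motions started from the equispaced-averaged configuration satisfies ∑_{j∈ℤ} ∫₀¹ q_j(ε)(1 − q_j(ε)) dε = (2/a)[ L Φ(−L/√(2t)) + √(t/π) (1 − e^{-L²/(4t)}) ], where Φ(x) = (1/√(2π)) ∫_{-∞}^x e^{-y²/2} dy; moreover this expression converges to (2/a)√(t/π) as L → ∞. -/

import Mathlib

open MeasureTheory Filter Set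

/-- Gaussian (heat) transition density at time `t`. -/
noncomputable def gaussPDF (t z : ℝ) : ℝ :=
  Real.exp (-(z ^ 2 / (2 * t))) / Real.sqrt (2 * Real.pi * t)

/-- Probability that the `j`-th Brownian particle, started from `a (j - ε)`,
lies in `[0, L]` at time `t`. -/
noncomputable def hitProb (t a L : ℝ) (j : ℤ) (ε : ℝ) : ℝ :=
  ∫ y in (0:ℝ)..L, gaussPDF t (y - a * ((j : ℝ) - ε))

/-- The standard normal cumulative distribution function. -/
noncomputable def stdNormalCDF (x : ℝ) : ℝ :=
  (1 / Real.sqrt (2 * Real.pi)) * ∫ y in Set.Iic x, Real.exp (-(y ^ 2 / 2))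

lemma gaussPDF_eq (t : ℝ) :
    gaussPDF t = fun z => Real.exp (-(1/(2*t)) * z ^ 2) / Real.sqrt (2 * Real.pi * t) := by
  funext z
  rw [gaussPDF]
  congr 2
  ring

lemma gauss_nonneg (t z : ℝ) : 0 ≤ gaussPDF t z :=
  div_nonneg (Real.exp_pos _).le (Real.sqrt_nonneg _)

lemma gauss_cont (t : ℝ) : Continuous (gaussPDF t) := by
  unfold gaussPDF
  exact (Real.continuous_exp.comp (by continuity)).div_const _

lemma gauss_integrable (t : ℝ) (ht : 0 < t) : Integrable (gaussPDF t) := by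
  rw [gaussPDF_eq]
  exact (integrable_exp_neg_mul_sq (by positivity)).div_const _

lemma gauss_integral (t : ℝ) (ht : 0 < t) : ∫ z, gaussPDF t z = 1 := by
  rw [gaussPDF_eq]
  rw [integral_div, integral_gaussian]
  rw [show Real.pi / (1/(2*t)) = 2 * Real.pi * t by field_simp]
  rw [div_self (by positivity : Real.sqrt (2 * Real.pi * t) ≠ 0)]

lemma gauss_le (t z : ℝ) (ht : 0 < t) : gaussPDF t z ≤ 1 / Real.sqrt (2 * Real.pi * t) := by
  unfold gaussPDF
  have h1 : Real.exp (-(z ^ 2 / (2 * t))) ≤ 1 := Real.exp_le_one_iff.mpr (neg_nonpos.mpr (by positivity))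
  gcongr

lemma gauss_even (t z : ℝ) : gaussPDF t (-z) = gaussPDF t z := by
  unfold gaussPDF; rw [neg_sq]

lemma integrable_stdGauss : Integrable (fun y : ℝ => Real.exp (-(y^2/2))) := by
  have h : (fun y : ℝ => Real.exp (-(y^2/2))) = fun y => Real.exp (-(1/2:ℝ) * y^2) := by
    funext y; congr 1; ring
  rw [h]; exact integrable_exp_neg_mul_sq (by norm_num)

lemma stdGauss_total : ∫ y : ℝ, Real.exp (-(y^2/2)) = Real.sqrt (2*Real.pi) := by
  have h : (fun y : ℝ => Real.exp (-(y^2/2))) = fun y => Real.exp (-(1/2:ℝ) * y^2) := by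
    funext y; congr 1; ring
  rw [h, integral_gaussian, show Real.pi / (1/2:ℝ) = 2 * Real.pi by ring]

lemma cont_stdGauss : Continuous (fun y : ℝ => Real.exp (-(y^2/2))) :=
  Real.continuous_exp.comp (by continuity)

lemma hasDerivAt_stdNormalCDF (x : ℝ) :
    HasDerivAt stdNormalCDF (Real.exp (-(x^2/2)) / Real.sqrt (2*Real.pi)) x := by
  have hint := integrable_stdGauss
  have hrw : stdNormalCDF = fun z => (1/Real.sqrt (2*Real.pi)) *
      ((∫ y in Iic (0:ℝ), Real.exp (-(y^2/2))) + ∫ y in (0:ℝ)..z, Real.exp (-(y^2/2))) := by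
    funext z
    rw [stdNormalCDF, ← intervalIntegral.integral_Iic_sub_Iic hint.integrableOn hint.integrableOn]
    ring
  rw [hrw]
  have hd : HasDerivAt (fun z => ∫ y in (0:ℝ)..z, Real.exp (-(y^2/2)))
      (Real.exp (-(x^2/2))) x := (cont_stdGauss.integral_hasStrictDerivAt 0 x).hasDerivAt
  have h3 := ((hd.const_add (∫ y in Iic (0:ℝ), Real.exp (-(y^2/2)))).const_mul
    (1/Real.sqrt (2*Real.pi)))
  have h2 : Real.exp (-(x^2/2)) / Real.sqrt (2*Real.pi)
      = (1/Real.sqrt (2*Real.pi)) * Real.exp (-(x^2/2)) := by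
    rw [one_div, inv_mul_eq_div]
  rw [h2]
  exact h3

lemma cont_stdNormalCDF : Continuous stdNormalCDF :=
  continuous_iff_continuousAt.mpr fun x => (hasDerivAt_stdNormalCDF x).continuousAt

lemma stdNormalCDF_nonneg (x : ℝ) : 0 ≤ stdNormalCDF x :=
  mul_nonneg (by positivity) (integral_nonneg fun y => (Real.exp_pos _).le)

lemma stdNormalCDF_neg (x : ℝ) : stdNormalCDF (-x) = 1 - stdNormalCDF x := by
  have hint := integrable_stdGauss
  have h1 : ∫ y in Iic (-x), Real.exp (-(y^2/2)) = ∫ y in Ioi x, Real.exp (-(y^2/2)) := by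
    have h2 := integral_comp_neg_Iic (-x) (fun y : ℝ => Real.exp (-(y^2/2)))
    simp only [neg_sq, neg_neg] at h2
    exact h2
  have h2 : (∫ y in Iic x, Real.exp (-(y^2/2))) + ∫ y in Ioi x, Real.exp (-(y^2/2))
      = Real.sqrt (2*Real.pi) := by
    rw [intervalIntegral.integral_Iic_add_Ioi hint.integrableOn hint.integrableOn, stdGauss_total]
  have hs : Real.sqrt (2*Real.pi) ≠ 0 := by positivity
  have h3 : ∫ y in Ioi x, Real.exp (-(y^2/2))
      = Real.sqrt (2*Real.pi) - ∫ y in Iic x, Real.exp (-(y^2/2)) := by linarith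
  unfold stdNormalCDF
  rw [h1, h3, mul_sub, one_div, inv_mul_cancel₀ hs, ← one_div]

noncomputable def cdfT (s x : ℝ) : ℝ := stdNormalCDF (x / Real.sqrt s)

lemma hasDerivAt_cdfT (s : ℝ) (hs : 0 < s) (x : ℝ) :
    HasDerivAt (cdfT s) (gaussPDF s x) x := by
  have hs' : Real.sqrt s ≠ 0 := by positivity
  have h := (hasDerivAt_stdNormalCDF (x / Real.sqrt s)).comp x
    ((hasDerivAt_id x).div_const (Real.sqrt s))
  have heq : Real.exp (-((x / Real.sqrt s)^2/2)) / Real.sqrt (2*Real.pi) * (1 / Real.sqrt s)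
      = gaussPDF s x := by
    rw [div_pow, Real.sq_sqrt hs.le, gaussPDF]
    rw [div_mul_div_comm, mul_one, ← Real.sqrt_mul (by positivity)]
    congr 2
    · ring
  rw [← heq]
  exact h

lemma cont_cdfT (s : ℝ) (hs : 0 < s) : Continuous (cdfT s) :=
  continuous_iff_continuousAt.mpr fun x => (hasDerivAt_cdfT s hs x).continuousAt

lemma integral_gaussPDF_sub (s : ℝ) (hs : 0 < s) (x c d : ℝ) :
    ∫ y in c..d, gaussPDF s (y - x) = cdfT s (d - x) - cdfT s (c - x) := by
  apply intervalIntegral.integral_eq_sub_of_hasDerivAt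
  · intro y _
    have h := (hasDerivAt_cdfT s hs (y - x)).comp y ((hasDerivAt_id y).sub_const x)
    simpa [Function.comp_def] using h
  · exact ((gauss_cont s).comp (continuous_id.sub continuous_const)).intervalIntegrable c d

noncomputable def KK (u : ℝ) : ℝ :=
  u * stdNormalCDF u + Real.exp (-(u^2/2)) / Real.sqrt (2*Real.pi)

lemma hasDerivAt_expsq (u : ℝ) :
    HasDerivAt (fun u : ℝ => Real.exp (-(u^2/2))) (Real.exp (-(u^2/2)) * (-u)) u := by
  have h : HasDerivAt (fun u : ℝ => -(u^2/2)) (-u) u := by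
    simpa using ((hasDerivAt_pow 2 u).div_const 2).fun_neg
  exact h.exp

lemma hasDerivAt_KK (u : ℝ) : HasDerivAt KK (stdNormalCDF u) u := by
  have h1 := (hasDerivAt_id u).mul (hasDerivAt_stdNormalCDF u)
  have h2 := (hasDerivAt_expsq u).div_const (Real.sqrt (2*Real.pi))
  have h := h1.add h2
  have heq : 1 * stdNormalCDF u + u * (Real.exp (-(u^2/2)) / Real.sqrt (2*Real.pi))
      + Real.exp (-(u^2/2)) * (-u) / Real.sqrt (2*Real.pi) = stdNormalCDF u := by ring
  rw [← heq]
  exact h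

noncomputable def MM (t x : ℝ) : ℝ := Real.sqrt (2*t) * KK (x / Real.sqrt (2*t))

lemma hasDerivAt_MM (t : ℝ) (ht : 0 < t) (x : ℝ) :
    HasDerivAt (MM t) (cdfT (2*t) x) x := by
  have hs' : Real.sqrt (2*t) ≠ 0 := by positivity
  have h := ((hasDerivAt_KK (x / Real.sqrt (2*t))).comp x
    ((hasDerivAt_id x).div_const (Real.sqrt (2*t)))).const_mul (Real.sqrt (2*t))
  have heq : Real.sqrt (2*t) * (stdNormalCDF (x / Real.sqrt (2*t)) * (1 / Real.sqrt (2*t)))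
      = cdfT (2*t) x := by
    rw [cdfT]; field_simp
  rw [← heq]
  exact h

lemma gauss_conv (t : ℝ) (ht : 0 < t) (y y' : ℝ) :
    ∫ x : ℝ, gaussPDF t (y - x) * gaussPDF t (y' - x) = gaussPDF (2*t) (y - y') := by
  have hpt : ∀ x : ℝ, gaussPDF t (y - x) * gaussPDF t (y' - x)
      = gaussPDF (2*t) (y - y') *
        (Real.exp (-(1/t) * (x - (y+y')/2)^2) / Real.sqrt (Real.pi * t)) := by
    intro x
    unfold gaussPDF
    rw [div_mul_div_comm, div_mul_div_comm, ← Real.exp_add, ← Real.exp_add]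
    congr 1
    · congr 1
      field_simp
      ring
    · rw [← Real.sqrt_mul (by positivity), ← Real.sqrt_mul (by positivity)]
      congr 1
      ring
  simp_rw [hpt]
  rw [integral_const_mul]
  have hg : ∫ x : ℝ, Real.exp (-(1/t) * (x - (y+y')/2)^2) = Real.sqrt (Real.pi * t) := by
    rw [integral_sub_right_eq_self (fun x => Real.exp (-(1/t) * x^2)) ((y+y')/2),
      integral_gaussian]
    congr 1
    field_simp
  rw [integral_div, hg, div_self (by positivity : Real.sqrt (Real.pi * t) ≠ 0), mul_one]

noncomputable def QQ (t L x : ℝ) : ℝ := ∫ y in (0:ℝ)..L, gaussPDF t (y - x)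

lemma integrable_gauss_sub_right (t : ℝ) (ht : 0 < t) (x : ℝ) :
    Integrable (fun y => gaussPDF t (y - x)) :=
  (gauss_integrable t ht).comp_sub_right x

lemma integrable_gauss_sub_left (t : ℝ) (ht : 0 < t) (y : ℝ) :
    Integrable (fun x => gaussPDF t (y - x)) := by
  have h := ((gauss_integrable t ht).comp_add_left y).comp_neg
  simpa [sub_eq_add_neg] using h

lemma integral_gauss_sub_left (t : ℝ) (ht : 0 < t) (y : ℝ) :
    ∫ x, gaussPDF t (y - x) = 1 := by
  rw [integral_sub_left_eq_self (gaussPDF t) volume y, gauss_integral t ht]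

lemma QQ_eq (t L : ℝ) (ht : 0 < t) (x : ℝ) :
    QQ t L x = cdfT t (L - x) - cdfT t (-x) := by
  rw [QQ, integral_gaussPDF_sub t ht, zero_sub]

lemma QQ_cont (t L : ℝ) (ht : 0 < t) : Continuous (QQ t L) := by
  have : QQ t L = fun x => cdfT t (L - x) - cdfT t (-x) := funext (QQ_eq t L ht)
  rw [this]
  exact ((cont_cdfT t ht).comp (continuous_const.sub continuous_id)).sub
    ((cont_cdfT t ht).comp continuous_neg)

lemma QQ_nonneg (t L : ℝ) (hL : 0 ≤ L) (x : ℝ) : 0 ≤ QQ t L x :=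
  intervalIntegral.integral_nonneg hL fun y _ => gauss_nonneg t _

lemma QQ_le_one (t L : ℝ) (ht : 0 < t) (hL : 0 ≤ L) (x : ℝ) : QQ t L x ≤ 1 := by
  rw [QQ, intervalIntegral.integral_of_le hL]
  calc ∫ y in Ioc 0 L, gaussPDF t (y - x)
      ≤ ∫ y, gaussPDF t (y - x) := setIntegral_le_integral
        (integrable_gauss_sub_right t ht x) (Eventually.of_forall fun y => gauss_nonneg t _)
    _ = 1 := by
        rw [integral_sub_right_eq_self (gaussPDF t) x, gauss_integral t ht]

lemma Hprod (t L : ℝ) (ht : 0 < t) :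
    Integrable (fun p : ℝ × ℝ => gaussPDF t (p.2 - p.1))
      (volume.prod (volume.restrict (Ioc (0:ℝ) L))) := by
  have hmeas : AEStronglyMeasurable (fun p : ℝ × ℝ => gaussPDF t (p.2 - p.1))
      (volume.prod (volume.restrict (Ioc (0:ℝ) L))) :=
    ((gauss_cont t).comp (continuous_snd.sub continuous_fst)).aestronglyMeasurable
  rw [integrable_prod_iff' hmeas]
  constructor
  · exact Eventually.of_forall fun y => integrable_gauss_sub_left t ht y
  · have h : ∀ y : ℝ, (∫ x, ‖gaussPDF t (y - x)‖) = 1 := by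
      intro y
      rw [← integral_gauss_sub_left t ht y]
      congr 1
      funext x
      exact Real.norm_of_nonneg (gauss_nonneg t _)
    simp_rw [h]
    exact integrable_const _

lemma integrable_QQ (t L : ℝ) (ht : 0 < t) (hL : 0 ≤ L) : Integrable (QQ t L) (volume) := by
  have h := (Hprod t L ht).integral_prod_left
  have h1 : QQ t L = fun x => ∫ y in Ioc (0:ℝ) L, gaussPDF t (y - x) := by
    funext x
    rw [QQ, intervalIntegral.integral_of_le hL]
  rw [h1]
  exact h

lemma integral_QQ (t L : ℝ) (ht : 0 < t) (hL : 0 ≤ L) : ∫ x, QQ t L x = L := by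
  have hswap := MeasureTheory.integral_integral_swap
    (f := fun x y => gaussPDF t (y - x)) (Hprod t L ht)
  have h1 : ∀ x, QQ t L x = ∫ y in Ioc (0:ℝ) L, gaussPDF t (y - x) := fun x => by
    rw [QQ, intervalIntegral.integral_of_le hL]
  calc ∫ x, QQ t L x = ∫ x, ∫ y in Ioc (0:ℝ) L, gaussPDF t (y - x) := by simp_rw [h1]
    _ = ∫ y in Ioc (0:ℝ) L, ∫ x, gaussPDF t (y - x) := hswap
    _ = ∫ _ in Ioc (0:ℝ) L, (1:ℝ) := by
        congr 1; funext y; exact integral_gauss_sub_left t ht y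
    _ = L := by
        simp [Real.volume_Ioc, ENNReal.toReal_ofReal hL, hL]

lemma norm_bound_aux (t L : ℝ) (ht : 0 < t) (hL : 0 ≤ L) (g q : ℝ) (hg : 0 ≤ g)
    (hq0 : 0 ≤ q) (hq1 : q ≤ 1) : ‖g * q‖ ≤ ‖g‖ := by
  rw [Real.norm_eq_abs, abs_mul, abs_of_nonneg hg, abs_of_nonneg hq0, Real.norm_of_nonneg hg]
  exact mul_le_of_le_one_right hg hq1

lemma integrable_QQ_sq (t L : ℝ) (ht : 0 < t) (hL : 0 ≤ L) :
    Integrable (fun x => QQ t L x * QQ t L x) := by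
  refine Integrable.mono (integrable_QQ t L ht hL)
    (((QQ_cont t L ht).mul (QQ_cont t L ht)).aestronglyMeasurable) ?_
  refine Eventually.of_forall fun x => ?_
  exact norm_bound_aux t L ht hL _ _ (QQ_nonneg t L hL x) (QQ_nonneg t L hL x)
    (QQ_le_one t L ht hL x)

lemma inner_conv (t L : ℝ) (ht : 0 < t) (hL : 0 ≤ L) (y : ℝ) :
    ∫ x, gaussPDF t (y - x) * QQ t L x
      = ∫ y' in Ioc (0:ℝ) L, gaussPDF (2*t) (y - y') := by
  have Hp3 : Integrable (fun p : ℝ × ℝ => gaussPDF t (y - p.1) * gaussPDF t (p.2 - p.1))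
      (volume.prod (volume.restrict (Ioc (0:ℝ) L))) := by
    refine Integrable.mono ((Hprod t L ht).const_mul (1/Real.sqrt (2*Real.pi*t)))
      (((gauss_cont t).comp (continuous_const.sub continuous_fst)).mul
        ((gauss_cont t).comp (continuous_snd.sub continuous_fst))).aestronglyMeasurable ?_
    refine Eventually.of_forall fun p => ?_
    rw [Real.norm_eq_abs, abs_mul, abs_of_nonneg (gauss_nonneg t _),
      abs_of_nonneg (gauss_nonneg t _), Real.norm_of_nonneg
        (mul_nonneg (by positivity) (gauss_nonneg t _))]
    exact mul_le_mul_of_nonneg_right (gauss_le t _ ht) (gauss_nonneg t _)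
  have hpt : ∀ x, gaussPDF t (y - x) * QQ t L x
      = ∫ y' in Ioc (0:ℝ) L, gaussPDF t (y - x) * gaussPDF t (y' - x) := by
    intro x
    rw [integral_const_mul, QQ, intervalIntegral.integral_of_le hL]
  have hswap := MeasureTheory.integral_integral_swap
    (f := fun x y' => gaussPDF t (y - x) * gaussPDF t (y' - x)) Hp3
  calc ∫ x, gaussPDF t (y - x) * QQ t L x
      = ∫ x, ∫ y' in Ioc (0:ℝ) L, gaussPDF t (y - x) * gaussPDF t (y' - x) := by simp_rw [hpt]
    _ = ∫ y' in Ioc (0:ℝ) L, ∫ x, gaussPDF t (y - x) * gaussPDF t (y' - x) := hswap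
    _ = ∫ y' in Ioc (0:ℝ) L, gaussPDF (2*t) (y - y') := by
        congr 1; funext y'; exact gauss_conv t ht y y'

lemma integral_QQ_sq (t L : ℝ) (ht : 0 < t) (hL : 0 ≤ L) :
    ∫ x, QQ t L x * QQ t L x = MM t L + MM t (-L) - 2 * MM t 0 := by
  have h2t : 0 < 2*t := by linarith
  have Hp2 : Integrable (fun p : ℝ × ℝ => gaussPDF t (p.2 - p.1) * QQ t L p.1)
      (volume.prod (volume.restrict (Ioc (0:ℝ) L))) := by
    refine Integrable.mono (Hprod t L ht)
      (((gauss_cont t).comp (continuous_snd.sub continuous_fst)).mul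
        ((QQ_cont t L ht).comp continuous_fst)).aestronglyMeasurable ?_
    exact Eventually.of_forall fun p => norm_bound_aux t L ht hL _ _ (gauss_nonneg t _)
      (QQ_nonneg t L hL _) (QQ_le_one t L ht hL _)
  have hpt : ∀ x, QQ t L x * QQ t L x
      = ∫ y in Ioc (0:ℝ) L, gaussPDF t (y - x) * QQ t L x := by
    intro x
    rw [integral_mul_const, QQ, intervalIntegral.integral_of_le hL]
  have hswap := MeasureTheory.integral_integral_swap
    (f := fun x y => gaussPDF t (y - x) * QQ t L x) Hp2
  have hinner2 : ∀ y : ℝ, (∫ y' in Ioc (0:ℝ) L, gaussPDF (2*t) (y - y'))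
      = cdfT (2*t) (L - y) - cdfT (2*t) (0 - y) := by
    intro y
    rw [← intervalIntegral.integral_of_le hL]
    have he : ∀ y' : ℝ, gaussPDF (2*t) (y - y') = gaussPDF (2*t) (y' - y) := by
      intro y'
      rw [show y - y' = -(y' - y) by ring, gauss_even]
    simp_rw [he]
    exact integral_gaussPDF_sub (2*t) h2t y 0 L
  have hFTC : ∫ y in (0:ℝ)..L, (cdfT (2*t) (L - y) - cdfT (2*t) (0 - y))
      = MM t L + MM t (-L) - 2 * MM t 0 := by
    have h := intervalIntegral.integral_eq_sub_of_hasDerivAt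
      (f := fun y => MM t (-y) - MM t (L - y))
      (f' := fun y => cdfT (2*t) (L - y) - cdfT (2*t) (0 - y)) (a := 0) (b := L)
      (fun y _ => by
        have d1 := (hasDerivAt_MM t ht (-y)).comp y (hasDerivAt_neg y)
        have d2 := (hasDerivAt_MM t ht (L - y)).comp y ((hasDerivAt_id y).const_sub L)
        have h12 := d1.sub d2
        have heq : cdfT (2*t) (-y) * (-1) - cdfT (2*t) (L - y) * (-1)
            = cdfT (2*t) (L - y) - cdfT (2*t) (0 - y) := by rw [zero_sub]; ring
        rw [heq] at h12
        exact h12)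
      ?_
    · rw [h]
      show MM t (-L) - MM t (L - L) - (MM t (-0) - MM t (L - 0)) = _
      rw [sub_self, neg_zero, sub_zero]
      ring
    · apply Continuous.intervalIntegrable
      exact ((cont_cdfT _ h2t).comp (continuous_const.sub continuous_id)).sub
        ((cont_cdfT _ h2t).comp (continuous_const.sub continuous_id))
  calc ∫ x, QQ t L x * QQ t L x
      = ∫ x, ∫ y in Ioc (0:ℝ) L, gaussPDF t (y - x) * QQ t L x := by simp_rw [hpt]
    _ = ∫ y in Ioc (0:ℝ) L, ∫ x, gaussPDF t (y - x) * QQ t L x := hswap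
    _ = ∫ y in Ioc (0:ℝ) L, (cdfT (2*t) (L - y) - cdfT (2*t) (0 - y)) := by
        refine setIntegral_congr_fun measurableSet_Ioc fun y _ => ?_
        rw [inner_conv t L ht hL y, hinner2 y]
    _ = ∫ y in (0:ℝ)..L, (cdfT (2*t) (L - y) - cdfT (2*t) (0 - y)) := by
        rw [intervalIntegral.integral_of_le hL]
    _ = MM t L + MM t (-L) - 2 * MM t 0 := hFTC

lemma tsum_intZ (a : ℝ) (ha : 0 < a) (f : ℝ → ℝ) (hf : Integrable f) :
    ∑' j : ℤ, ∫ x in (a*((j:ℝ)-1))..(a*(j:ℝ)), f x = ∫ x, f x := by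
  have hle : ∀ j : ℤ, a*((j:ℝ)-1) ≤ a*(j:ℝ) := fun j =>
    mul_le_mul_of_nonneg_left (by linarith) ha.le
  have hU : (⋃ j : ℤ, Ioc (a*((j:ℝ)-1)) (a*(j:ℝ))) = univ := by
    ext x
    simp only [mem_iUnion, mem_Ioc, mem_univ, iff_true]
    refine ⟨⌈x/a⌉, ?_, ?_⟩
    · have h1 : (⌈x/a⌉:ℝ) - 1 < x/a := by
        have := Int.ceil_lt_add_one (x/a); linarith
      calc a*((⌈x/a⌉:ℝ)-1) < a*(x/a) := by exact mul_lt_mul_of_pos_left h1 ha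
        _ = x := by field_simp
    · have h2 : x/a ≤ (⌈x/a⌉:ℝ) := Int.le_ceil _
      calc x = a*(x/a) := by field_simp
        _ ≤ a*(⌈x/a⌉:ℝ) := mul_le_mul_of_nonneg_left h2 ha.le
  have hd : Pairwise (Function.onFun Disjoint fun j : ℤ => Ioc (a*((j:ℝ)-1)) (a*(j:ℝ))) := by
    intro i j hij
    have key : ∀ i j : ℤ, i < j →
        Disjoint (Ioc (a*((i:ℝ)-1)) (a*(i:ℝ))) (Ioc (a*((j:ℝ)-1)) (a*(j:ℝ))) := by
      intro i j h
      apply Set.Ioc_disjoint_Ioc.mpr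
      have hij' : (i:ℝ) ≤ (j:ℝ) - 1 := by
        have : (i:ℝ) + 1 ≤ (j:ℝ) := by exact_mod_cast h
        linarith
      calc min (a*(i:ℝ)) (a*(j:ℝ)) ≤ a*(i:ℝ) := min_le_left _ _
        _ ≤ a*((j:ℝ)-1) := mul_le_mul_of_nonneg_left hij' ha.le
        _ ≤ max (a*((i:ℝ)-1)) (a*((j:ℝ)-1)) := le_max_right _ _
    rcases lt_or_gt_of_ne hij with h | h
    · exact key i j h
    · exact (key j i h).symm
  have hInt := MeasureTheory.integral_iUnion (μ := volume) (f := f)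
    (fun j : ℤ => measurableSet_Ioc) hd (by rw [hU]; exact hf.integrableOn)
  rw [hU] at hInt
  simp only [Measure.restrict_univ] at hInt
  rw [hInt]
  congr 1
  funext j
  rw [intervalIntegral.integral_of_le (hle j)]

lemma MM_L (t L : ℝ) (ht : 0 < t) : MM t L
    = L * stdNormalCDF (L / Real.sqrt (2*t))
      + Real.sqrt (t/Real.pi) * Real.exp (-(L^2/(4*t))) := by
  have hs2 : (0:ℝ) < Real.sqrt (2*t) := Real.sqrt_pos.mpr (by linarith)
  have hsq : (L / Real.sqrt (2*t))^2 = L^2/(2*t) := by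
    rw [div_pow, Real.sq_sqrt (by linarith : (0:ℝ) ≤ 2*t)]
  have hexp : -((L / Real.sqrt (2*t))^2/2) = -(L^2/(4*t)) := by
    rw [hsq]; ring
  have hs4 : Real.sqrt (2*t) / Real.sqrt (2*Real.pi) = Real.sqrt (t/Real.pi) := by
    rw [← Real.sqrt_div (by linarith : (0:ℝ) ≤ 2*t)]
    congr 1
    rw [div_eq_div_iff (by positivity) (Real.pi_pos.ne')]
    ring
  have h5 : Real.sqrt (2*t) * (Real.exp (-(L^2/(4*t))) / Real.sqrt (2*Real.pi))
      = Real.sqrt (t/Real.pi) * Real.exp (-(L^2/(4*t))) := by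
    rw [← hs4]; ring
  rw [MM, KK, hexp, mul_add, ← mul_assoc, mul_div_cancel₀ _ hs2.ne', h5]

lemma MM_zero (t : ℝ) (ht : 0 < t) : MM t 0 = Real.sqrt (t/Real.pi) := by
  have h := MM_L t 0 ht
  simpa using h

lemma MM_algebra (t L : ℝ) (ht : 0 < t) :
    L - (MM t L + MM t (-L) - 2 * MM t 0)
      = 2 * (L * stdNormalCDF (-L / Real.sqrt (2*t))
          + Real.sqrt (t/Real.pi) * (1 - Real.exp (-(L^2/(4*t))))) := by
  have h1 := MM_L t L ht
  have h2 := MM_L t (-L) ht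
  have h3 := MM_zero t ht
  have hnd : (-L) / Real.sqrt (2*t) = -(L / Real.sqrt (2*t)) := neg_div _ _
  have hΦ : stdNormalCDF (L / Real.sqrt (2*t))
      = 1 - stdNormalCDF (-(L / Real.sqrt (2*t))) := by
    have := stdNormalCDF_neg (L / Real.sqrt (2*t))
    linarith
  rw [hnd, neg_sq] at h2
  rw [h1, h2, h3, hΦ, hnd]
  ring

lemma key_formula (a t L : ℝ) (ha : 0 < a) (ht : 0 < t) (hL : 0 < L) :
    (∑' j : ℤ, ∫ ε in (0:ℝ)..1, hitProb t a L j ε * (1 - hitProb t a L j ε)) =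
      (2 / a) * (L * stdNormalCDF (-L / Real.sqrt (2 * t)) +
        Real.sqrt (t / Real.pi) * (1 - Real.exp (-(L ^ 2 / (4 * t))))) := by
  set f : ℝ → ℝ := fun x => QQ t L x * (1 - QQ t L x) with hf
  have hitrw : ∀ (j : ℤ) (ε : ℝ), hitProb t a L j ε = QQ t L (a*((j:ℝ)-ε)) := fun _ _ => rfl
  have hfint : Integrable f := by
    have h : f = fun x => QQ t L x - QQ t L x * QQ t L x := by
      funext x; rw [hf]; ring
    rw [h]
    exact (integrable_QQ t L ht hL.le).sub (integrable_QQ_sq t L ht hL.le)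
  have hj : ∀ j : ℤ, (∫ ε in (0:ℝ)..1, hitProb t a L j ε * (1 - hitProb t a L j ε))
      = a⁻¹ * ∫ x in (a*((j:ℝ)-1))..(a*(j:ℝ)), f x := by
    intro j
    have h0 : (∫ ε in (0:ℝ)..1, hitProb t a L j ε * (1 - hitProb t a L j ε))
        = ∫ ε in (0:ℝ)..1, f (a*((j:ℝ)-ε)) := by
      rfl
    have h1 := intervalIntegral.integral_comp_sub_left (a := (0:ℝ)) (b := 1)
      (fun u => f (a*u)) (j:ℝ)
    have h2 := intervalIntegral.integral_comp_mul_left (a := (j:ℝ)-1) (b := (j:ℝ))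
      (f := f) (c := a) ha.ne'
    rw [h0, h1, sub_zero, h2, smul_eq_mul]
  have hsum : (∑' j : ℤ, ∫ ε in (0:ℝ)..1, hitProb t a L j ε * (1 - hitProb t a L j ε))
      = a⁻¹ * ∫ x, f x := by
    simp_rw [hj]
    rw [tsum_mul_left, tsum_intZ a ha f hfint]
  have hint : ∫ x, f x = L - (MM t L + MM t (-L) - 2 * MM t 0) := by
    have h : f = fun x => QQ t L x - QQ t L x * QQ t L x := by
      funext x; rw [hf]; ring
    rw [h, integral_sub (integrable_QQ t L ht hL.le) (integrable_QQ_sq t L ht hL.le),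
      integral_QQ t L ht hL.le, integral_QQ_sq t L ht hL.le]
  rw [hsum, hint, MM_algebra t L ht]
  ring

lemma integrable_y_gauss : Integrable (fun y : ℝ => -y * Real.exp (-(y^2/2))) := by
  have h : (fun y : ℝ => -y * Real.exp (-(y^2/2)))
      = fun y => -(y * Real.exp (-(1/2:ℝ) * y^2)) := by
    funext y; rw [neg_mul]; congr 2; ring
  rw [h]
  exact (integrable_mul_exp_neg_mul_sq (by norm_num)).neg

lemma integral_Iic_y_gauss (c : ℝ) :
    ∫ y in Iic c, -y * Real.exp (-(y^2/2)) = Real.exp (-(c^2/2)) := by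
  have h := MeasureTheory.integral_Iic_of_hasDerivAt_of_tendsto
    (f := fun y : ℝ => Real.exp (-(y^2/2))) (f' := fun y => -y * Real.exp (-(y^2/2)))
    (a := c) (m := 0)
    (cont_stdGauss.continuousWithinAt)
    (fun y _ => by
      have := hasDerivAt_expsq y
      rwa [mul_comm] at this)
    (integrable_y_gauss.integrableOn)
    ?_
  · rw [h, sub_zero]
  · have h1 : Tendsto (fun y : ℝ => -(y^2/2)) atBot atBot := by
      apply tendsto_neg_atTop_atBot.comp
      apply Tendsto.atTop_div_const (by norm_num : (0:ℝ) < 2)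
      have h2 := (tendsto_pow_atTop (n := 2) (by norm_num)).comp
        (tendsto_neg_atBot_atTop (G := ℝ))
      have h3 : ((fun x : ℝ => x ^ 2) ∘ Neg.neg) = fun y : ℝ => y ^ 2 := by
        funext y; simp
      rwa [h3] at h2
    exact Real.tendsto_exp_atBot.comp h1

lemma stdNormalCDF_neg_le (x : ℝ) (hx : 0 < x) :
    stdNormalCDF (-x) ≤ Real.exp (-(x^2/2)) / (x * Real.sqrt (2*Real.pi)) := by
  have hb : ∫ y in Iic (-x), Real.exp (-(y^2/2))
      ≤ ∫ y in Iic (-x), x⁻¹ * (-y * Real.exp (-(y^2/2))) := by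
    apply setIntegral_mono_on (integrable_stdGauss.integrableOn)
      ((integrable_y_gauss.const_mul _).integrableOn) measurableSet_Iic
    intro y hy
    have hy' : y ≤ -x := mem_Iic.mp hy
    have h1 : 1 ≤ x⁻¹ * (-y) := by
      rw [← div_eq_inv_mul]
      rw [le_div_iff₀ hx]
      linarith
    nlinarith [Real.exp_pos (-(y^2/2))]
  have hval : ∫ y in Iic (-x), x⁻¹ * (-y * Real.exp (-(y^2/2)))
      = x⁻¹ * Real.exp (-(x^2/2)) := by
    rw [integral_const_mul, integral_Iic_y_gauss, neg_sq]
  rw [hval] at hb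
  rw [stdNormalCDF]
  calc (1 / Real.sqrt (2*Real.pi)) * ∫ y in Iic (-x), Real.exp (-(y^2/2))
      ≤ (1 / Real.sqrt (2*Real.pi)) * (x⁻¹ * Real.exp (-(x^2/2))) := by
        apply mul_le_mul_of_nonneg_left hb (by positivity)
    _ = Real.exp (-(x^2/2)) / (x * Real.sqrt (2*Real.pi)) := by
        field_simp

lemma limit_part (a t : ℝ) (ha : 0 < a) (ht : 0 < t) :
    Tendsto (fun L : ℝ =>
        (2 / a) * (L * stdNormalCDF (-L / Real.sqrt (2 * t)) +
          Real.sqrt (t / Real.pi) * (1 - Real.exp (-(L ^ 2 / (4 * t))))))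
      atTop (nhds ((2 / a) * Real.sqrt (t / Real.pi))) := by
  have h2t : (0:ℝ) < 2*t := by linarith
  have hs2 : (0:ℝ) < Real.sqrt (2*t) := Real.sqrt_pos.mpr h2t
  have hexp : Tendsto (fun L : ℝ => Real.exp (-(L^2/(4*t)))) atTop (nhds 0) := by
    apply Real.tendsto_exp_atBot.comp
    apply tendsto_neg_atTop_atBot.comp
    apply Tendsto.atTop_div_const (by linarith : (0:ℝ) < 4*t)
    exact tendsto_pow_atTop (by norm_num)
  have hfirst : Tendsto (fun L : ℝ => L * stdNormalCDF (-L / Real.sqrt (2*t)))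
      atTop (nhds 0) := by
    have hup : Tendsto (fun L : ℝ =>
        (Real.sqrt (2*t) / Real.sqrt (2*Real.pi)) * Real.exp (-(L^2/(4*t))))
        atTop (nhds 0) := by
      have := hexp.const_mul (Real.sqrt (2*t) / Real.sqrt (2*Real.pi))
      simpa using this
    apply tendsto_of_tendsto_of_tendsto_of_le_of_le' tendsto_const_nhds hup
    · filter_upwards [eventually_gt_atTop (0:ℝ)] with L hL
      exact mul_nonneg hL.le (stdNormalCDF_nonneg _)
    · filter_upwards [eventually_gt_atTop (0:ℝ)] with L hL
      have hu : 0 < L / Real.sqrt (2*t) := div_pos hL hs2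
      have hbd := stdNormalCDF_neg_le (L / Real.sqrt (2*t)) hu
      have hnd : -L / Real.sqrt (2*t) = -(L / Real.sqrt (2*t)) := neg_div _ _
      rw [hnd]
      have hsq : ((L / Real.sqrt (2*t))^2/2) = L^2/(4*t) := by
        rw [div_pow, Real.sq_sqrt h2t.le]; ring
      calc L * stdNormalCDF (-(L / Real.sqrt (2*t)))
          ≤ L * (Real.exp (-((L / Real.sqrt (2*t))^2/2))
              / ((L / Real.sqrt (2*t)) * Real.sqrt (2*Real.pi))) :=
            mul_le_mul_of_nonneg_left hbd hL.le
        _ = (Real.sqrt (2*t) / Real.sqrt (2*Real.pi)) * Real.exp (-(L^2/(4*t))) := by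
            rw [hsq]
            field_simp
    
  have hsecond : Tendsto (fun L : ℝ =>
      Real.sqrt (t/Real.pi) * (1 - Real.exp (-(L^2/(4*t))))) atTop
      (nhds (Real.sqrt (t/Real.pi))) := by
    have := (tendsto_const_nhds (x := (1:ℝ)) (f := atTop)).sub hexp
    have h2 := this.const_mul (Real.sqrt (t/Real.pi))
    simpa using h2
  have := (hfirst.add hsecond).const_mul (2/a)
  simpa using this

theorem brownian_numVar (a t : ℝ) (ha : 0 < a) (ht : 0 < t) :
    (∀ L : ℝ, 0 < L →
      (∑' j : ℤ, ∫ ε in (0:ℝ)..1, hitProb t a L j ε * (1 - hitProb t a L j ε)) =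
        (2 / a) * (L * stdNormalCDF (-L / Real.sqrt (2 * t)) +
          Real.sqrt (t / Real.pi) * (1 - Real.exp (-(L ^ 2 / (4 * t)))))) ∧
    Tendsto (fun L : ℝ =>
        (2 / a) * (L * stdNormalCDF (-L / Real.sqrt (2 * t)) +
          Real.sqrt (t / Real.pi) * (1 - Real.exp (-(L ^ 2 / (4 * t))))))
      atTop (nhds ((2 / a) * Real.sqrt (t / Real.pi))) := by
  exact ⟨fun L hL => key_formula a t L ha ht hL, limit_part a t ha ht⟩
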